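/- Let p ≥ 1, q ≥ 0, N = p + q, and let (t_i, a_i)_{i=1}^r be a good parameter satisfying the nonvanishing condition, such that every rational occurs at most twice in the multiset ν. If some rational occurs both in ν_{<j} and in ν_{>j}, then every element of ν_j belongs to ν_{>j} and q_j = 0; moreover every rational occurring in both ν_{<j} and ν_{>j} is strictly greater than max ν_j. -/

import Mathlib

open Finset

/-- The multiset `P(λ) = {λ_i − (N−1)/2 + (p−i) : 1 ≤ i ≤ p}` of rationals,
for `N = p + q` and a weight `λ : ℕ → ℤ` (1-based indexing). -/
def Pms (p q : ℕ) (lam : ℕ → ℤ) : Multiset ℚ :=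
  (Finset.Icc 1 p).val.map
    (fun i => (lam i : ℚ) - ((p : ℚ) + (q : ℚ) - 1) / 2 + ((p : ℚ) - (i : ℚ)))

/-- The multiset `Q(λ) = {λ_{p+i} + (N−1)/2 − (i−1) : 1 ≤ i ≤ q}`. -/
def Qms (p q : ℕ) (lam : ℕ → ℤ) : Multiset ℚ :=
  (Finset.Icc 1 q).val.map
    (fun i => (lam (p + i) : ℚ) + ((p : ℚ) + (q : ℚ) - 1) / 2 - ((i : ℚ) - 1))

/-- Dominance: `λ_1 ≥ … ≥ λ_p` and `λ_{p+1} ≥ … ≥ λ_{p+q}`. -/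
def Dominant (p q : ℕ) (lam : ℕ → ℤ) : Prop :=
  (∀ i, 1 ≤ i → i < p → lam (i + 1) ≤ lam i) ∧
  (∀ i, p + 1 ≤ i → i < p + q → lam (i + 1) ≤ lam i)

/-- `p' = #{i : 1 ≤ i ≤ p, λ_i = λ_p}`. -/
def pPrime (p : ℕ) (lam : ℕ → ℤ) : ℕ :=
  ((Finset.Icc 1 p).filter (fun i => lam i = lam p)).card

/-- `q' = #{i : p+1 ≤ i ≤ p+q, λ_i = λ_{p+1}}`. -/
def qPrime (p q : ℕ) (lam : ℕ → ℤ) : ℕ :=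
  ((Finset.Icc (p + 1) (p + q)).filter (fun i => lam i = lam (p + 1))).card

/-- The segment `P' = {λ_p − (N−1)/2 + k : 0 ≤ k ≤ p'−1}`. -/
def Pseg (p q : ℕ) (lam : ℕ → ℤ) : Finset ℚ :=
  (Finset.range (pPrime p lam)).image
    (fun k : ℕ => (lam p : ℚ) - ((p : ℚ) + (q : ℚ) - 1) / 2 + (k : ℚ))

/-- The segment `Q' = {λ_{p+1} + (N−1)/2 − k : 0 ≤ k ≤ q'−1}`. -/
def Qseg (p q : ℕ) (lam : ℕ → ℤ) : Finset ℚ :=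
  (Finset.range (qPrime p q lam)).image
    (fun k : ℕ => (lam (p + 1) : ℚ) + ((p : ℚ) + (q : ℚ) - 1) / 2 - (k : ℚ))

/-- `I = P' ∩ Q'`. -/
def Iseg (p q : ℕ) (lam : ℕ → ℤ) : Finset ℚ := Pseg p q lam ∩ Qseg p q lam

/-- A good parameter `(t_1,a_1),…,(t_r,a_r)` for `U(p,q)` (1-based indexing). -/
structure GoodParam (p q r : ℕ) (t : ℕ → ℤ) (a : ℕ → ℕ) : Prop where
  hr : 1 ≤ r
  hpos : ∀ i ∈ Finset.Icc 1 r, 0 < a i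
  hsum : ∑ i ∈ Finset.Icc 1 r, a i = p + q
  heven : ∀ i ∈ Finset.Icc 1 r, Even (t i + (a i : ℤ) + (p : ℤ) + (q : ℤ))
  hdec : ∀ i, 1 ≤ i → i < r → t (i + 1) ≤ t i
  hadec : ∀ i, 1 ≤ i → i < r → t i = t (i + 1) → a (i + 1) ≤ a i

/-- The segment `ν_i = {(t_i − a_i + 1)/2 + k : 0 ≤ k ≤ a_i − 1}` as a multiset of rationals. -/
def nu (t : ℕ → ℤ) (a : ℕ → ℕ) (i : ℕ) : Multiset ℚ :=
  (Multiset.range (a i)).map (fun k => ((t i : ℚ) - (a i : ℚ) + 1) / 2 + (k : ℚ))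

/-- `ν_{<j} = ν_1 ⊔ … ⊔ ν_{j−1}`. -/
def nuLt (t : ℕ → ℤ) (a : ℕ → ℕ) (j : ℕ) : Multiset ℚ :=
  ∑ k ∈ Finset.Icc 1 (j - 1), nu t a k

/-- `ν_{>j} = ν_{j+1} ⊔ … ⊔ ν_r`. -/
def nuGt (t : ℕ → ℤ) (a : ℕ → ℕ) (r j : ℕ) : Multiset ℚ :=
  ∑ k ∈ Finset.Icc (j + 1) r, nu t a k

/-- `ν = ν_1 ⊔ … ⊔ ν_r`. -/
def nuAll (t : ℕ → ℤ) (a : ℕ → ℕ) (r : ℕ) : Multiset ℚ :=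
  ∑ k ∈ Finset.Icc 1 r, nu t a k

/-- `j` is the least index with `a_1 + … + a_j ≥ p`. -/
structure LeastJ (p r : ℕ) (a : ℕ → ℕ) (j : ℕ) : Prop where
  h1 : 1 ≤ j
  hle : j ≤ r
  hge : p ≤ ∑ ℓ ∈ Finset.Icc 1 j, a ℓ
  hmin : ∀ i, i < j → ∑ ℓ ∈ Finset.Icc 1 i, a ℓ < p

/-- `p_j = p − (a_1 + … + a_{j−1})`. -/
def pj (p : ℕ) (a : ℕ → ℕ) (j : ℕ) : ℕ := p - ∑ ℓ ∈ Finset.Icc 1 (j - 1), a ℓ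

/-- `q_j = q − (a_{j+1} + … + a_r)`. -/
def qj (q r : ℕ) (a : ℕ → ℕ) (j : ℕ) : ℕ := q - ∑ ℓ ∈ Finset.Icc (j + 1) r, a ℓ

/-- The nonvanishing condition: `ν_{<j}` and `ν_{>j}` are multiplicity free,
`#(ν_j ∩ ν_{<j}) ≤ q_j` and `#(ν_j ∩ ν_{>j}) ≤ p_j`. -/
def NonVanishing (p q r : ℕ) (t : ℕ → ℤ) (a : ℕ → ℕ) (j : ℕ) : Prop :=
  (nuLt t a j).Nodup ∧ (nuGt t a r j).Nodup ∧
  Multiset.card ((nu t a j).filter (fun x => x ∈ nuLt t a j)) ≤ qj q r a j ∧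
  Multiset.card ((nu t a j).filter (fun x => x ∈ nuGt t a r j)) ≤ pj p a j

/-- if every rational occurs at most twice in `ν` and some rational occurs
both in `ν_{<j}` and in `ν_{>j}`, then `ν_j ⊆ ν_{>j}`, `q_j = 0`, and every rational
common to `ν_{<j}` and `ν_{>j}` is strictly greater than `max ν_j = (t_j + a_j − 1)/2`. -/

lemma mem_nu_iff {t : ℕ → ℤ} {a : ℕ → ℕ} {i : ℕ} {x : ℚ} :
    x ∈ nu t a i ↔ ∃ k : ℕ, k < a i ∧ 2 * x = (t i : ℚ) - (a i : ℚ) + 1 + 2 * k := by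
  have hc : (do let a ← Multiset.range (a i); pure ((a:ℚ)) : Multiset ℚ)
      = Multiset.map (fun n : ℕ => (n:ℚ)) (Multiset.range (a i)) := by simp
  rw [nu]
  constructor
  · intro h
    obtain ⟨y, hy, hye⟩ := Multiset.mem_map.mp h
    rw [hc] at hy
    obtain ⟨k, hk, rfl⟩ := Multiset.mem_map.mp hy
    exact ⟨k, Multiset.mem_range.mp hk, by rw [← hye]; ring⟩
  · rintro ⟨k, hk, h⟩
    refine Multiset.mem_map.mpr ⟨(k : ℚ), ?_, by linarith⟩
    rw [hc]
    exact Multiset.mem_map.mpr ⟨k, Multiset.mem_range.mpr hk, rfl⟩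

lemma nu_bounds {t : ℕ → ℤ} {a : ℕ → ℕ} {i : ℕ} {x : ℚ} (hx : x ∈ nu t a i) :
    (t i : ℚ) - a i + 1 ≤ 2 * x ∧ 2 * x ≤ (t i : ℚ) + a i - 1 := by
  obtain ⟨k, hk, he⟩ := mem_nu_iff.mp hx
  have h1 : (k : ℚ) + 1 ≤ a i := by exact_mod_cast hk
  have h0 : (0 : ℚ) ≤ k := Nat.cast_nonneg k
  constructor <;> linarith

lemma nu_mem_of_bounds {t : ℕ → ℤ} {a : ℕ → ℕ} {i j : ℕ} {x : ℚ}
    (hpar : Even (t i + (a i : ℤ) - (t j + (a j : ℤ))))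
    (hx : x ∈ nu t a i)
    (h1 : (t j : ℚ) - a j + 1 ≤ 2 * x) (h2 : 2 * x ≤ (t j : ℚ) + a j - 1) :
    x ∈ nu t a j := by
  obtain ⟨k, hk, he⟩ := mem_nu_iff.mp hx
  obtain ⟨d, hd⟩ := hpar
  set m : ℤ := t i - a i + 1 + 2 * k with hm
  have hxm : 2 * x = (m : ℚ) := by rw [he, hm]; push_cast; ring
  rw [hxm] at h1 h2
  have hb1 : (t j : ℤ) - a j + 1 ≤ m := by exact_mod_cast h1
  have hb2 : m ≤ (t j : ℤ) + a j - 1 := by exact_mod_cast h2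
  refine mem_nu_iff.mpr ⟨((m - (t j - a j + 1)) / 2).toNat, by omega, ?_⟩
  rw [hxm]
  have key : ((((m - (t j - a j + 1)) / 2).toNat : ℤ)) * 2 = m - (t j - a j + 1) := by omega
  have keyQ : ((((m - (t j - a j + 1)) / 2).toNat : ℚ)) * 2
      = (m : ℚ) - ((t j : ℚ) - a j + 1) := by exact_mod_cast key
  linarith

lemma sum_split {M : Type*} [AddCommMonoid M] (f : ℕ → M) {j r : ℕ} (h1 : 1 ≤ j) (h2 : j ≤ r) :
    ∑ i ∈ Icc 1 r, f i = (∑ i ∈ Icc 1 (j-1), f i) + f j + ∑ i ∈ Icc (j+1) r, f i := by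
  have e1 : Finset.Icc 1 r = Finset.Ioc 0 r := Finset.Icc_add_one_left_eq_Ioc 0 r
  have e2 : Finset.Icc 1 (j-1) = Finset.Ioc 0 (j-1) := Finset.Icc_add_one_left_eq_Ioc 0 (j-1)
  have e3 : Finset.Icc (j+1) r = Finset.Ioc j r := Finset.Icc_add_one_left_eq_Ioc j r
  rw [e1, e2, e3]
  rw [← Finset.sum_Ioc_consecutive f (Nat.zero_le (j-1)) (show j-1 ≤ r by omega)]
  rw [← Finset.sum_Ioc_consecutive f (show j-1 ≤ j by omega) h2]
  have hs : Finset.Ioc (j-1) j = {j} := by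
    ext x
    simp only [Finset.mem_Ioc, Finset.mem_singleton]
    omega
  rw [hs, Finset.sum_singleton, add_assoc]

lemma mem_nuLt {t : ℕ → ℤ} {a : ℕ → ℕ} {j : ℕ} {x : ℚ} :
    x ∈ nuLt t a j ↔ ∃ u ∈ Finset.Icc 1 (j-1), x ∈ nu t a u := by
  unfold nuLt; exact Multiset.mem_sum

lemma mem_nuGt {t : ℕ → ℤ} {a : ℕ → ℕ} {r j : ℕ} {x : ℚ} :
    x ∈ nuGt t a r j ↔ ∃ v ∈ Finset.Icc (j+1) r, x ∈ nu t a v := by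
  unfold nuGt; exact Multiset.mem_sum

lemma nuAll_decomp (t : ℕ → ℤ) (a : ℕ → ℕ) {j r : ℕ} (h1 : 1 ≤ j) (h2 : j ≤ r) :
    nuAll t a r = nuLt t a j + nu t a j + nuGt t a r j := by
  unfold nuAll nuLt nuGt
  exact sum_split (fun k => nu t a k) h1 h2

lemma card_nu (t : ℕ → ℤ) (a : ℕ → ℕ) (i : ℕ) : Multiset.card (nu t a i) = a i := by
  simp [nu]

theorem statement6 (p q r j : ℕ) (hp : 1 ≤ p) (t : ℕ → ℤ) (a : ℕ → ℕ)
    (hgp : GoodParam p q r t a) (hj : LeastJ p r a j)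
    (hnv : NonVanishing p q r t a j)
    (hmult : ∀ x : ℚ, Multiset.count x (nuAll t a r) ≤ 2)
    (hx : ∃ x : ℚ, x ∈ nuLt t a j ∧ x ∈ nuGt t a r j) :
    (∀ y ∈ nu t a j, y ∈ nuGt t a r j) ∧ qj q r a j = 0 ∧
    (∀ x : ℚ, x ∈ nuLt t a j → x ∈ nuGt t a r j →
      ((t j : ℚ) + (a j : ℚ) - 1) / 2 < x) := by
  obtain ⟨hr, hpos, hsum, heven, hdec, hadec⟩ := hgp
  obtain ⟨hj1, hjr, hge, hmin⟩ := hj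
  obtain ⟨hndLt, hndGt, hcLt, hcGt⟩ := hnv
  -- parity compatibility between segments
  have hpar : ∀ i1 i2, i1 ∈ Finset.Icc 1 r → i2 ∈ Finset.Icc 1 r →
      Even (t i1 + (a i1 : ℤ) - (t i2 + (a i2 : ℤ))) := by
    intro i1 i2 h1 h2
    obtain ⟨x1, hx1⟩ := heven i1 h1
    obtain ⟨x2, hx2⟩ := heven i2 h2
    exact ⟨x1 - x2, by omega⟩
  -- antitonicity of t
  have ht_anti : ∀ u v, 1 ≤ u → u ≤ v → v ≤ r → t v ≤ t u := by
    intro u v h1 h2 h3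
    induction v with
    | zero => omega
    | succ n ih =>
      rcases Nat.eq_or_lt_of_le h2 with h | h
      · rw [h]
      · have := hdec n (by omega) (by omega)
        exact this.trans (ih (by omega) (by omega))
  -- arithmetic facts about the sums of the a's
  have hposj : 1 ≤ a j := hpos j (Finset.mem_Icc.mpr ⟨hj1, hjr⟩)
  have hsplit : ∑ i ∈ Finset.Icc 1 r, a i =
      (∑ i ∈ Finset.Icc 1 (j-1), a i) + a j + ∑ i ∈ Finset.Icc (j+1) r, a i :=
    sum_split a hj1 hjr
  have hLp : ∑ i ∈ Finset.Icc 1 (j-1), a i < p := hmin (j-1) (by omega)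
  have hgej : p ≤ (∑ i ∈ Finset.Icc 1 (j-1), a i) + a j := by
    have h0 : ∑ i ∈ Finset.Icc 1 j, a i =
        (∑ i ∈ Finset.Icc 1 (j-1), a i) + a j + ∑ i ∈ Finset.Icc (j+1) j, a i :=
      sum_split a hj1 le_rfl
    rw [Finset.Icc_eq_empty (show ¬ j+1 ≤ j by omega), Finset.sum_empty] at h0
    omega
  -- the key claim: any common element is > max ν_j
  have key : ∀ x : ℚ, x ∈ nuLt t a j → x ∈ nuGt t a r j →
      ((t j : ℚ) + (a j : ℚ) - 1) / 2 < x := by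
    intro x hxl hxg
    obtain ⟨u, hu, hxu⟩ := mem_nuLt.mp hxl
    obtain ⟨v, hv, hxv⟩ := mem_nuGt.mp hxg
    have hu1 : 1 ≤ u := (Finset.mem_Icc.mp hu).1
    have hu2 : u ≤ j - 1 := (Finset.mem_Icc.mp hu).2
    have hur : u ∈ Finset.Icc 1 r := Finset.mem_Icc.mpr ⟨hu1, by omega⟩
    have hjmem : j ∈ Finset.Icc 1 r := Finset.mem_Icc.mpr ⟨hj1, hjr⟩
    by_contra hle
    push_neg at hle
    have hle2 : 2 * x ≤ (t j : ℚ) + a j - 1 := by linarith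
    rcases le_or_gt ((t j : ℚ) - a j + 1) (2 * x) with hge' | hlt
    · -- x would lie in ν_j : multiplicity ≥ 3, contradiction
      have hxj : x ∈ nu t a j := nu_mem_of_bounds (hpar u j hur hjmem) hxu hge' hle2
      have h3 := hmult x
      rw [nuAll_decomp t a hj1 hjr, Multiset.count_add, Multiset.count_add] at h3
      have c1 : 0 < Multiset.count x (nuLt t a j) := Multiset.count_pos.mpr hxl
      have c2 : 0 < Multiset.count x (nu t a j) := Multiset.count_pos.mpr hxj
      have c3 : 0 < Multiset.count x (nuGt t a r j) := Multiset.count_pos.mpr hxg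
      omega
    · -- x < min ν_j : then ν_j ⊆ ν_u ⊆ ν_{<j}, contradicting the count bound
      obtain ⟨hbu1, hbu2⟩ := nu_bounds hxu
      have htu : t j ≤ t u := ht_anti u j hu1 (by omega) hjr
      have htuQ : (t j : ℚ) ≤ (t u : ℚ) := by exact_mod_cast htu
      have hsub : ∀ y ∈ nu t a j, y ∈ nu t a u := by
        intro y hy
        obtain ⟨hby1, hby2⟩ := nu_bounds hy
        exact nu_mem_of_bounds (hpar j u hjmem hur) hy (by linarith) (by linarith)
      have hfil : Multiset.card ((nu t a j).filter (fun x => x ∈ nuLt t a j)) = a j := by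
        rw [Multiset.filter_eq_self.mpr, card_nu]
        intro y hy
        exact mem_nuLt.mpr ⟨u, hu, hsub y hy⟩
      rw [hfil] at hcLt
      unfold qj at hcLt
      omega
  obtain ⟨x, hxl, hxg⟩ := hx
  have hkx := key x hxl hxg
  have hkx2 : (t j : ℚ) + a j - 1 < 2 * x := by linarith
  obtain ⟨v, hv, hxv⟩ := mem_nuGt.mp hxg
  have hv1 : j + 1 ≤ v := (Finset.mem_Icc.mp hv).1
  have hv2 : v ≤ r := (Finset.mem_Icc.mp hv).2
  have hvr : v ∈ Finset.Icc 1 r := Finset.mem_Icc.mpr ⟨by omega, hv2⟩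
  have hjmem : j ∈ Finset.Icc 1 r := Finset.mem_Icc.mpr ⟨hj1, hjr⟩
  have htv : t v ≤ t j := ht_anti j v hj1 (by omega) hv2
  have htvQ : (t v : ℚ) ≤ (t j : ℚ) := by exact_mod_cast htv
  obtain ⟨hbv1, hbv2⟩ := nu_bounds hxv
  have hsubG : ∀ y ∈ nu t a j, y ∈ nuGt t a r j := by
    intro y hy
    obtain ⟨hby1, hby2⟩ := nu_bounds hy
    have : y ∈ nu t a v :=
      nu_mem_of_bounds (hpar j v hjmem hvr) hy (by linarith) (by linarith)
    exact mem_nuGt.mpr ⟨v, hv, this⟩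
  refine ⟨hsubG, ?_, key⟩
  have hfil : Multiset.card ((nu t a j).filter (fun x => x ∈ nuGt t a r j)) = a j := by
    rw [Multiset.filter_eq_self.mpr, card_nu]
    exact hsubG
  rw [hfil] at hcGt
  unfold pj at hcGt
  unfold qj
  omega
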